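/- arXiv:1808.04855 — 3 statements merged into one kernel-verified Lean document; each statement's English description precedes it below -/
import Mathlib

section
/- Let M₀, M₁ be invertible 2×2 real matrices and for t ∈ [0,1] define M_t := (1-t)·M₀ + t·M₁. If M_t is invertible, then M_t⁻¹ = ((1-t)·M₀⁻¹ + det(M₁M₀⁻¹)·t·M₁⁻¹) / (det(M₁M₀⁻¹)·t² + tr(M₁M₀⁻¹)·t(1-t) + (1-t)²). -/
open Matrix

theorem stmt_0 (M₀ M₁ : Matrix (Fin 2) (Fin 2) ℝ)
    (h₀ : IsUnit M₀) (h₁ : IsUnit M₁) (t : ℝ) (ht : t ∈ Set.Icc (0:ℝ) 1)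
    (Mt : Matrix (Fin 2) (Fin 2) ℝ) (hMt : Mt = (1 - t) • M₀ + t • M₁)
    (hinv : IsUnit Mt) :
    Mt⁻¹ = ((M₁ * M₀⁻¹).det * t ^ 2 + (M₁ * M₀⁻¹).trace * (t * (1 - t)) + (1 - t) ^ 2)⁻¹ •
      ((1 - t) • M₀⁻¹ + ((M₁ * M₀⁻¹).det * t) • M₁⁻¹) := by
  set A := M₁ * M₀⁻¹ with hA
  have hd0 : IsUnit M₀.det := (Matrix.isUnit_iff_isUnit_det M₀).mp h₀
  have hd1 : IsUnit M₁.det := (Matrix.isUnit_iff_isUnit_det M₁).mp h₁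
  have h00 : M₀ * M₀⁻¹ = 1 := Matrix.mul_nonsing_inv M₀ hd0
  have h00' : M₀⁻¹ * M₀ = 1 := Matrix.nonsing_inv_mul M₀ hd0
  have h11 : M₁ * M₁⁻¹ = 1 := Matrix.mul_nonsing_inv M₁ hd1
  have hAM : A * M₀ = M₁ := by
    rw [hA, Matrix.mul_assoc, h00', Matrix.mul_one]
  have hAinv : A⁻¹ = M₀ * M₁⁻¹ := by
    rw [hA, Matrix.mul_inv_rev, Matrix.nonsing_inv_nonsing_inv M₀ hd0]
  have hdA : A.det ≠ 0 := by
    have : A.det * M₀.det = M₁.det := by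
      rw [← Matrix.det_mul, hAM]
    intro h
    rw [h, zero_mul] at this
    exact hd1.ne_zero this.symm
  have hkey : A.det • A⁻¹ + A = A.trace • (1 : Matrix (Fin 2) (Fin 2) ℝ) := by
    have hinvdef : A⁻¹ = A.det⁻¹ • A.adjugate := by rw [Matrix.inv_def, Ring.inverse_eq_inv]
    rw [hinvdef, smul_smul, mul_inv_cancel₀ hdA, one_smul]
    ext i j
    fin_cases i <;> fin_cases j <;>
      simp [Matrix.adjugate_fin_two, Matrix.trace_fin_two, Matrix.one_apply] <;> ring
  set D : ℝ := A.det * t ^ 2 + A.trace * (t * (1 - t)) + (1 - t) ^ 2 with hD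
  have hMtB : Mt = ((1 - t) • (1 : Matrix (Fin 2) (Fin 2) ℝ) + t • A) * M₀ := by
    rw [hMt, Matrix.add_mul, Matrix.smul_mul, Matrix.smul_mul, Matrix.one_mul, hAM]
  have hdetB : ((1 - t) • (1 : Matrix (Fin 2) (Fin 2) ℝ) + t • A).det = D := by
    simp [Matrix.det_fin_two, Matrix.trace_fin_two, hD, Matrix.one_apply]
    ring
  have hDne : D ≠ 0 := by
    intro h
    have hdet : Mt.det = 0 := by
      rw [hMtB, Matrix.det_mul, hdetB, h, zero_mul]
    exact ((Matrix.isUnit_iff_isUnit_det Mt).mp hinv).ne_zero hdet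
  apply Matrix.inv_eq_right_inv
  have hexp : Mt * ((1 - t) • M₀⁻¹ + (A.det * t) • M₁⁻¹) = D • 1 := by
    rw [hMt, Matrix.add_mul, Matrix.mul_add, Matrix.mul_add]
    simp only [Matrix.smul_mul, Matrix.mul_smul, h00, h11]
    rw [← hAinv, ← hA]
    trans (((1 - t) ^ 2 + A.det * t ^ 2) • (1 : Matrix (Fin 2) (Fin 2) ℝ) +
        (t * (1 - t)) • (A.det • A⁻¹ + A))
    · match_scalars <;> ring
    · rw [hkey, hD]
      match_scalars <;> ring
  rw [Matrix.mul_smul, hexp, smul_smul, inv_mul_cancel₀ hDne, one_smul]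
end

section
/- For all a, b ∈ (0,1) with a ≠ b and a + b > 1, we have 3a(a-1) + 3b(b-1) + 8ab > 0, and hence ρ*_{a,b} > 1. -/
theorem stmt_4 (a b : ℝ) (ha : a ∈ Set.Ioo (0:ℝ) 1) (hb : b ∈ Set.Ioo (0:ℝ) 1)
    (hab : a ≠ b) (hsum : a + b > 1) :
    3 * a * (a - 1) + 3 * b * (b - 1) + 8 * a * b > 0 ∧
    1 + (a - b) ^ 2 * (3 * a * (a - 1) + 3 * b * (b - 1) + 8 * a * b) /
      (4 * (a + b) ^ 2 * (a * (1 - a) + b * (1 - b))) > 1 := by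
  obtain ⟨ha0, ha1⟩ := ha
  obtain ⟨hb0, hb1⟩ := hb
  have h1 : 3 * a * (a - 1) + 3 * b * (b - 1) + 8 * a * b > 0 := by
    nlinarith [mul_pos ha0 hb0, sq_nonneg (a + b - 1)]
  refine ⟨h1, ?_⟩
  have h2 : (a - b) ^ 2 > 0 := by
    have : a - b ≠ 0 := sub_ne_zero.mpr hab
    positivity
  have h3 : 4 * (a + b) ^ 2 * (a * (1 - a) + b * (1 - b)) > 0 := by
    have : a * (1 - a) > 0 := by nlinarith
    have : b * (1 - b) > 0 := by nlinarith
    positivity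
  have := div_pos (mul_pos h2 h1) h3
  linarith
end

section
/- Fix p ∈ (0,1) and π₁ ∈ (0,1), π₂ = 1 - π₁. Define for q ∈ (0,1), q ≠ p: ρ*(q) := ((√p + √q)²(π₁p² + π₂q²)²(√(π₁p(1-p²) + π₂q(1-pq)) + √(π₁p(1-pq) + π₂q(1-q²)))²) / (4(π₁p + π₂q)²(√(π₁p⁴(1-p²) + π₂pq³(1-pq)) + √(π₁p³q(1-pq) + π₂q⁴(1-q²)))²). Then as q → 0⁺, ρ*(q) → (1 + √(1-p²))² / (4(1-p²)), and this limit is strictly greater than 1. -/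
open Filter Real

theorem stmt_16 (p π₁ : ℝ) (hp : p ∈ Set.Ioo (0:ℝ) 1) (hπ : π₁ ∈ Set.Ioo (0:ℝ) 1)
    (π₂ : ℝ) (hπ₂ : π₂ = 1 - π₁)
    (ρ : ℝ → ℝ)
    (hρ : ∀ q : ℝ, ρ q =
      ((Real.sqrt p + Real.sqrt q) ^ 2 * (π₁ * p ^ 2 + π₂ * q ^ 2) ^ 2 *
        (Real.sqrt (π₁ * p * (1 - p ^ 2) + π₂ * q * (1 - p * q)) +
         Real.sqrt (π₁ * p * (1 - p * q) + π₂ * q * (1 - q ^ 2))) ^ 2) /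
      (4 * (π₁ * p + π₂ * q) ^ 2 *
        (Real.sqrt (π₁ * p ^ 4 * (1 - p ^ 2) + π₂ * p * q ^ 3 * (1 - p * q)) +
         Real.sqrt (π₁ * p ^ 3 * q * (1 - p * q) + π₂ * q ^ 4 * (1 - q ^ 2))) ^ 2)) :
    Tendsto ρ (nhdsWithin 0 (Set.Ioi 0)) (nhds ((1 + Real.sqrt (1 - p ^ 2)) ^ 2 / (4 * (1 - p ^ 2)))) ∧
    (1 + Real.sqrt (1 - p ^ 2)) ^ 2 / (4 * (1 - p ^ 2)) > 1 := by
  obtain ⟨hp0, hp1⟩ := hp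
  obtain ⟨hπ0, hπ1⟩ := hπ
  have hs : 0 < 1 - p ^ 2 := by nlinarith
  have hs1 : 1 - p ^ 2 < 1 := by nlinarith
  set s := Real.sqrt (1 - p ^ 2) with hsdef
  have hs0 : 0 < s := Real.sqrt_pos.mpr hs
  have hsq : s ^ 2 = 1 - p ^ 2 := Real.sq_sqrt hs.le
  have hslt1 : s < 1 := by nlinarith
  constructor
  · have hρf : ρ = fun q => ((Real.sqrt p + Real.sqrt q) ^ 2 * (π₁ * p ^ 2 + π₂ * q ^ 2) ^ 2 *
        (Real.sqrt (π₁ * p * (1 - p ^ 2) + π₂ * q * (1 - p * q)) +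
         Real.sqrt (π₁ * p * (1 - p * q) + π₂ * q * (1 - q ^ 2))) ^ 2) /
      (4 * (π₁ * p + π₂ * q) ^ 2 *
        (Real.sqrt (π₁ * p ^ 4 * (1 - p ^ 2) + π₂ * p * q ^ 3 * (1 - p * q)) +
         Real.sqrt (π₁ * p ^ 3 * q * (1 - p * q) + π₂ * q ^ 4 * (1 - q ^ 2))) ^ 2) :=
      funext hρ
    have hdpos : 0 < 4 * (π₁ * p + π₂ * 0) ^ 2 *
        (Real.sqrt (π₁ * p ^ 4 * (1 - p ^ 2) + π₂ * p * 0 ^ 3 * (1 - p * 0)) +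
         Real.sqrt (π₁ * p ^ 3 * 0 * (1 - p * 0) + π₂ * 0 ^ 4 * (1 - 0 ^ 2))) ^ 2 := by
      have : 0 < Real.sqrt (π₁ * p ^ 4 * (1 - p ^ 2)) :=
        Real.sqrt_pos.mpr (by positivity)
      norm_num
      positivity
    have hc : ContinuousAt ρ 0 := by
      rw [hρf]
      apply ContinuousAt.div
      · fun_prop
      · fun_prop
      · exact ne_of_gt hdpos
    have hT := hc.tendsto
    have hval : ρ 0 = (1 + s) ^ 2 / (4 * (1 - p ^ 2)) := by
      rw [hρ 0]
      norm_num
      have e1 : π₁ * p * (1 - p ^ 2) = (π₁ * p) * (1 - p ^ 2) := by ring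
      have e2 : Real.sqrt (π₁ * p * (1 - p ^ 2)) = Real.sqrt (π₁ * p) * s := by
        rw [e1, Real.sqrt_mul (by positivity)]
      have e3 : (Real.sqrt p) ^ 2 = p := Real.sq_sqrt hp0.le
      have e4 : (Real.sqrt (π₁ * p)) ^ 2 = π₁ * p := Real.sq_sqrt (by positivity)
      have e5 : (Real.sqrt (π₁ * p ^ 4 * (1 - p ^ 2))) ^ 2 = π₁ * p ^ 4 * (1 - p ^ 2) :=
        Real.sq_sqrt (by positivity)
      rw [e2]
      have expand : (Real.sqrt (π₁ * p) * s + Real.sqrt (π₁ * p)) ^ 2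
          = (Real.sqrt (π₁ * p)) ^ 2 * (s + 1) ^ 2 := by ring
      rw [expand, e3, e4, e5]
      field_simp
      ring
    rw [← hval]
    exact hT.mono_left nhdsWithin_le_nhds
  · rw [gt_iff_lt, lt_div_iff₀ (by positivity)]
    nlinarith
end
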